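/- (Bhatia–Šemrl Theorem, real case) Let H be an n-dimensional real Hilbert space with n > 1, and let A, B be linear operators on H. Then A is Birkhoff–James orthogonal to B in the operator norm, i.e., ‖A + λB‖ ≥ ‖A‖ for all real λ, if and only if there exists a unit vector y₀ ∈ H such that ‖Ay₀‖ = ‖A‖ and ⟨Ay₀, By₀⟩ = 0. -/

import Mathlib

open ContinuousLinearMap Filter Topology Set

section Aux

variable {H : Type*} [NormedAddCommGroup H] [InnerProductSpace ℝ H]
    [FiniteDimensional ℝ H]

/-- On a nontrivial finite-dimensional space, the operator norm is attained on the sphere. -/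
lemma bs_exists_norm_attained [Nontrivial H] (C : H →L[ℝ] H) :
    ∃ x : H, ‖x‖ = 1 ∧ ‖C x‖ = ‖C‖ := by
  obtain ⟨x₀, hx₀⟩ := exists_norm_eq H (le_of_lt one_pos)
  have hne : (Metric.sphere (0:H) 1).Nonempty := ⟨x₀, by simp [hx₀]⟩
  obtain ⟨x, hxS, hmax⟩ := (isCompact_sphere (0:H) 1).exists_isMaxOn hne
    ((continuous_norm.comp C.continuous).continuousOn)
  have hx1 : ‖x‖ = 1 := by simpa using hxS
  refine ⟨x, hx1, le_antisymm ?_ ?_⟩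
  · calc ‖C x‖ ≤ ‖C‖ * ‖x‖ := C.le_opNorm x
    _ = ‖C‖ := by rw [hx1, mul_one]
  · refine C.opNorm_le_bound (norm_nonneg _) (fun v => ?_)
    rcases eq_or_ne v 0 with rfl | hv
    · simp
    · have hvn : ‖v‖ ≠ 0 := norm_ne_zero_iff.mpr hv
      have hu : (‖v‖⁻¹ • v) ∈ Metric.sphere (0:H) 1 := by
        simp [norm_smul, abs_of_nonneg (inv_nonneg.mpr (norm_nonneg v)),
          inv_mul_cancel₀ hvn]
      have h1 : ‖C (‖v‖⁻¹ • v)‖ ≤ ‖C x‖ := hmax hu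
      have h2 : ‖C (‖v‖⁻¹ • v)‖ = ‖v‖⁻¹ * ‖C v‖ := by
        rw [map_smul, norm_smul, norm_inv, norm_norm]
      rw [h2] at h1
      calc ‖C v‖ = ‖v‖ * (‖v‖⁻¹ * ‖C v‖) := by field_simp
        _ ≤ ‖v‖ * ‖C x‖ := mul_le_mul_of_nonneg_left h1 (norm_nonneg v)
        _ = ‖C x‖ * ‖v‖ := mul_comm _ _

/-- Limit lemma: from Birkhoff–James orthogonality we get a maximizing unit vector
with nonnegative inner product. -/
lemma bs_aux [Nontrivial H] (A B : H →L[ℝ] H)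
    (h : ∀ t : ℝ, ‖A‖ ≤ ‖A + t • B‖) :
    ∃ y : H, ‖y‖ = 1 ∧ ‖A y‖ = ‖A‖ ∧ 0 ≤ (inner ℝ (A y) (B y) : ℝ) := by
  set t : ℕ → ℝ := fun k => ((k : ℝ) + 1)⁻¹ with ht
  have htpos : ∀ k, 0 < t k := fun k => by positivity
  have htlim : Tendsto t atTop (𝓝 0) := by
    simpa [ht, one_div] using tendsto_one_div_add_atTop_nhds_zero_nat (𝕜 := ℝ)
  choose x hx1 hxmax using fun k => bs_exists_norm_attained (A + t k • B)
  have hxS : ∀ k, x k ∈ Metric.sphere (0:H) 1 := fun k => by simp [hx1 k]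
  obtain ⟨y, hyS, φ, hφ, hlim⟩ :=
    (isCompact_sphere (0:H) 1).tendsto_subseq hxS
  have hy1 : ‖y‖ = 1 := by simpa using hyS
  have htφlim : Tendsto (fun k => t (φ k)) atTop (𝓝 0) :=
    htlim.comp hφ.tendsto_atTop
  -- key per-index facts
  have key : ∀ k, ‖A‖ - t k * ‖B‖ ≤ ‖A (x k)‖ ∧
      - (t k) * ‖B‖^2 / 2 ≤ (inner ℝ (A (x k)) (B (x k)) : ℝ) := by
    intro k
    have hAx : ‖A (x k)‖ ≤ ‖A‖ := by
      calc ‖A (x k)‖ ≤ ‖A‖ * ‖x k‖ := A.le_opNorm _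
        _ = ‖A‖ := by rw [hx1 k, mul_one]
    have hBx : ‖B (x k)‖ ≤ ‖B‖ := by
      calc ‖B (x k)‖ ≤ ‖B‖ * ‖x k‖ := B.le_opNorm _
        _ = ‖B‖ := by rw [hx1 k, mul_one]
    have happ : (A + t k • B) (x k) = A (x k) + t k • B (x k) := by
      simp [ContinuousLinearMap.add_apply, ContinuousLinearMap.smul_apply]
    have hdown : ‖A‖ ≤ ‖A (x k) + t k • B (x k)‖ := by
      rw [← happ, hxmax k]; exact h (t k)
    constructor
    · have hb : ‖A (x k) + t k • B (x k)‖ ≤ ‖A (x k)‖ + t k * ‖B‖ := by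
        calc ‖A (x k) + t k • B (x k)‖ ≤ ‖A (x k)‖ + ‖t k • B (x k)‖ := norm_add_le _ _
          _ = ‖A (x k)‖ + |t k| * ‖B (x k)‖ := by rw [norm_smul, Real.norm_eq_abs]
          _ ≤ ‖A (x k)‖ + t k * ‖B‖ := by
              rw [abs_of_nonneg (htpos k).le]
              exact add_le_add_right (mul_le_mul_of_nonneg_left hBx (htpos k).le) _
      linarith [hdown]
    · have hsq : ‖A (x k)‖^2 ≤ ‖A (x k) + t k • B (x k)‖^2 := by
        have h0 : ‖A (x k)‖ ≤ ‖A (x k) + t k • B (x k)‖ := le_trans hAx hdown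
        nlinarith [norm_nonneg (A (x k))]
      have hexp : ‖A (x k) + t k • B (x k)‖^2
          = ‖A (x k)‖^2 + 2 * (t k * (inner ℝ (A (x k)) (B (x k)) : ℝ))
            + (t k)^2 * ‖B (x k)‖^2 := by
        rw [norm_add_sq_real, real_inner_smul_right, norm_smul, Real.norm_eq_abs,
          mul_pow, sq_abs]
      rw [hexp] at hsq
      have hBx2 : ‖B (x k)‖^2 ≤ ‖B‖^2 := by nlinarith [norm_nonneg (B (x k))]
      have htk := htpos k
      nlinarith [hsq, mul_le_mul_of_nonneg_left hBx2 (sq_nonneg (t k))]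
  -- continuity limits along the subsequence
  have hAcont : Tendsto (fun k => ‖A (x (φ k))‖) atTop (𝓝 ‖A y‖) :=
    ((continuous_norm.comp A.continuous).tendsto y).comp hlim
  have hInner : Tendsto (fun k => (inner ℝ (A (x (φ k))) (B (x (φ k))) : ℝ)) atTop
      (𝓝 (inner ℝ (A y) (B y) : ℝ)) := by
    have hc : Continuous fun v : H => (inner ℝ (A v) (B v) : ℝ) :=
      Continuous.inner A.continuous B.continuous
    exact (hc.tendsto y).comp hlim
  have hAynorm : ‖A y‖ = ‖A‖ := by
    have hle : ‖A y‖ ≤ ‖A‖ :=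
      le_of_tendsto hAcont (Eventually.of_forall (fun k => by
        calc ‖A (x (φ k))‖ ≤ ‖A‖ * ‖x (φ k)‖ := A.le_opNorm _
          _ = ‖A‖ := by rw [hx1, mul_one]))
    have hge : ‖A‖ ≤ ‖A y‖ := by
      have hlo : Tendsto (fun k => ‖A‖ - t (φ k) * ‖B‖) atTop (𝓝 (‖A‖ - 0 * ‖B‖)) :=
        tendsto_const_nhds.sub (htφlim.mul tendsto_const_nhds)
      rw [zero_mul, sub_zero] at hlo
      exact le_of_tendsto_of_tendsto' hlo hAcont (fun k => (key (φ k)).1)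
    exact le_antisymm hle hge
  have hInnerPos : 0 ≤ (inner ℝ (A y) (B y) : ℝ) := by
    have hlo : Tendsto (fun k => - (t (φ k)) * ‖B‖^2 / 2) atTop
        (𝓝 (-(0:ℝ) * ‖B‖^2 / 2)) :=
      ((htφlim.neg).mul tendsto_const_nhds).div_const 2
    rw [neg_zero, zero_mul, zero_div] at hlo
    exact le_of_tendsto_of_tendsto' hlo hInner (fun k => (key (φ k)).2)
  exact ⟨y, hy1, hAynorm, hInnerPos⟩

/-- A norm-attaining unit vector is an eigenvector of `A† A` for eigenvalue `‖A‖²`. -/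
lemma bs_eigen (A : H →L[ℝ] H) {x : H} (hx : ‖x‖ = 1) (hAx : ‖A x‖ = ‖A‖) :
    (ContinuousLinearMap.adjoint A) (A x) = (‖A‖^2) • x := by
  set v := (ContinuousLinearMap.adjoint A) (A x) with hv
  set c := ‖A‖^2 with hc
  have hinner : (inner ℝ v x : ℝ) = c := by
    rw [hv, ContinuousLinearMap.adjoint_inner_left, real_inner_self_eq_norm_sq, hAx]
  have hnv : ‖v‖ ≤ c := by
    calc ‖v‖ ≤ ‖ContinuousLinearMap.adjoint A‖ * ‖A x‖ :=
          (ContinuousLinearMap.adjoint A).le_opNorm _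
      _ = ‖A‖ * ‖A‖ := by
          rw [hAx]
          congr 1
          exact ContinuousLinearMap.adjoint.norm_map A
      _ = c := by rw [hc]; ring
  have hkey : ‖v - c • x‖^2 ≤ 0 := by
    have hexp : ‖v - c • x‖^2 = ‖v‖^2 - 2 * (c * (inner ℝ v x : ℝ)) + c^2 * ‖x‖^2 := by
      rw [norm_sub_sq_real, real_inner_smul_right, norm_smul, Real.norm_eq_abs,
        mul_pow, sq_abs]
    rw [hexp, hinner, hx]
    nlinarith [norm_nonneg v]
  have hzero : ‖v - c • x‖ = 0 := by nlinarith [norm_nonneg (v - c • x)]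
  have hsub : v - c • x = 0 := norm_eq_zero.mp hzero
  rw [hv] at hsub ⊢
  rw [sub_eq_zero] at hsub
  exact hsub

/-- Converse: a unit eigenvector of `A† A` for eigenvalue `‖A‖²` attains the norm. -/
lemma bs_eigen_conv (A : H →L[ℝ] H) {x : H} (hx : ‖x‖ = 1)
    (hv : (ContinuousLinearMap.adjoint A) (A x) = (‖A‖^2) • x) : ‖A x‖ = ‖A‖ := by
  have h1 : ‖A x‖^2 = ‖A‖^2 := by
    have : (inner ℝ ((ContinuousLinearMap.adjoint A) (A x)) x : ℝ) = ‖A x‖^2 := by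
      rw [ContinuousLinearMap.adjoint_inner_left, real_inner_self_eq_norm_sq]
    rw [hv, real_inner_smul_left, real_inner_self_eq_norm_sq, hx] at this
    simpa using this.symm
  nlinarith [norm_nonneg (A x), norm_nonneg A, h1]

end Aux

/-- **Theorem 2.9 (Bhatia–Šemrl, real case).** For linear operators `A, B` on an
`n`-dimensional real Hilbert space `H` with `n > 1`: `A ⊥_B B` in the operator norm iff
there exists a unit vector `y₀` with `‖A y₀‖ = ‖A‖` and `⟪A y₀, B y₀⟫ = 0`. -/
theorem bhatia_semrl_real
    {H : Type*} [NormedAddCommGroup H] [InnerProductSpace ℝ H]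
    [FiniteDimensional ℝ H] {n : ℕ} (hn : 1 < n)
    (hdim : Module.finrank ℝ H = n)
    (A B : H →L[ℝ] H) :
    (∀ t : ℝ, ‖A‖ ≤ ‖A + t • B‖) ↔
      ∃ y₀ : H, ‖y₀‖ = 1 ∧ ‖A y₀‖ = ‖A‖ ∧ (inner ℝ (A y₀) (B y₀) : ℝ) = 0 := by
  haveI : Nontrivial H := by
    have : 0 < Module.finrank ℝ H := by omega
    exact Module.nontrivial_of_finrank_pos this
  constructor
  · -- hard direction
    intro h
    obtain ⟨y, hy1, hAy, hfy⟩ := bs_aux A B h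
    have hB' : ∀ t : ℝ, ‖A‖ ≤ ‖A + t • (-B)‖ := by
      intro t
      have : A + t • (-B) = A + (-t) • B := by
        rw [smul_neg, neg_smul]
      rw [this]
      exact h (-t)
    obtain ⟨z, hz1, hAz, hfz'⟩ := bs_aux A (-B) hB'
    have hfz : (inner ℝ (A z) (B z) : ℝ) ≤ 0 := by
      have : (inner ℝ (A z) ((-B) z) : ℝ) = -(inner ℝ (A z) (B z) : ℝ) := by
        rw [ContinuousLinearMap.neg_apply, inner_neg_right]
      rw [this] at hfz'
      linarith
    by_cases hzy : z = -y
    · -- then f(z) = f(y), so f(y) = 0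
      have heq : (inner ℝ (A z) (B z) : ℝ) = (inner ℝ (A y) (B y) : ℝ) := by
        rw [hzy, map_neg, map_neg, inner_neg_neg]
      refine ⟨y, hy1, hAy, le_antisymm (by rw [← heq]; exact hfz) hfy⟩
    · -- path in the eigenspace from y to z
      set c := ‖A‖^2 with hc
      set w : ℝ → H := fun s => (1 - s) • y + s • z with hw
      have hwne : ∀ s ∈ Icc (0:ℝ) 1, w s ≠ 0 := by
        intro s hs h0
        rcases eq_or_ne s 0 with rfl | hs0
        · simp [hw] at h0
          rw [h0] at hy1; simp at hy1
        · have hspos : 0 < s := lt_of_le_of_ne hs.1 (Ne.symm hs0)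
          have hz_eq : z = (s⁻¹ * (s - 1)) • y := by
            have h1 : s • z = (s - 1) • y := by
              have := h0
              rw [hw] at this
              simp only at this
              have : s • z = -((1 - s) • y) := by linear_combination (norm := abel) this
              rw [this, ← neg_smul]; ring_nf
            calc z = s⁻¹ • (s • z) := by rw [smul_smul, inv_mul_cancel₀ hs0, one_smul]
              _ = s⁻¹ • ((s - 1) • y) := by rw [h1]
              _ = (s⁻¹ * (s - 1)) • y := by rw [smul_smul]
          have hnorm : |s⁻¹ * (s - 1)| = 1 := by
            have := congrArg norm hz_eq
            rw [hz1, norm_smul, hy1, mul_one, Real.norm_eq_abs] at this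
            exact this.symm
          have habs : s⁻¹ * (s - 1) = 1 - s⁻¹ := by field_simp
          have hsle : s ≤ 1 := hs.2
          have hinv1 : 1 ≤ s⁻¹ := by
            nlinarith [mul_inv_cancel₀ hs0, inv_pos.mpr hspos]
          have : s⁻¹ - 1 = 1 := by
            rw [habs] at hnorm
            rw [abs_of_nonpos (by linarith)] at hnorm
            linarith
          have hs_half : s = 1/2 := by
            have : s⁻¹ = 2 := by linarith
            field_simp at this
            linarith
          rw [hs_half] at hz_eq
          norm_num at hz_eq
          exact hzy (by rw [hz_eq])
      have hwc : Continuous w := by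
        apply Continuous.add
        · exact (continuous_const.sub continuous_id).smul continuous_const
        · exact continuous_id.smul continuous_const
      set γ : ℝ → H := fun s => ‖w s‖⁻¹ • w s with hγ
      have hγS : ∀ s ∈ Icc (0:ℝ) 1, ‖γ s‖ = 1 := by
        intro s hs
        have hne := hwne s hs
        rw [hγ]
        simp only
        rw [norm_smul, norm_inv, norm_norm, inv_mul_cancel₀ (norm_ne_zero_iff.mpr hne)]
      have hγcont : ContinuousOn γ (Icc 0 1) := by
        apply ContinuousOn.smul
        · exact ((continuous_norm.comp hwc).continuousOn).inv₀
            (fun s hs => norm_ne_zero_iff.mpr (hwne s hs))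
        · exact hwc.continuousOn
      set g : ℝ → ℝ := fun s => (inner ℝ (A (γ s)) (B (γ s)) : ℝ) with hg
      have hgcont : ContinuousOn g (Icc 0 1) := by
        apply ContinuousOn.inner
        · exact A.continuous.comp_continuousOn hγcont
        · exact B.continuous.comp_continuousOn hγcont
      have hγ0 : γ 0 = y := by
        have : w 0 = y := by simp [hw]
        rw [hγ]; simp only [this, hy1]; norm_num
      have hγ1 : γ 1 = z := by
        have : w 1 = z := by simp [hw]
        rw [hγ]; simp only [this, hz1]; norm_num
      have hg0 : 0 ≤ g 0 := by rw [hg]; simp only [hγ0]; exact hfy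
      have hg1 : g 1 ≤ 0 := by rw [hg]; simp only [hγ1]; exact hfz
      have hivt : (0:ℝ) ∈ g '' Icc 0 1 :=
        intermediate_value_Icc' (by norm_num) hgcont ⟨hg1, hg0⟩
      obtain ⟨s₀, hs₀, hgs₀⟩ := hivt
      refine ⟨γ s₀, hγS s₀ hs₀, ?_, hgs₀⟩
      -- norm attained at γ s₀, via the eigenspace
      apply bs_eigen_conv A (hγS s₀ hs₀)
      have hey : (ContinuousLinearMap.adjoint A) (A y) = c • y := bs_eigen A hy1 hAy
      have hez : (ContinuousLinearMap.adjoint A) (A z) = c • z := bs_eigen A hz1 hAz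
      have hew : (ContinuousLinearMap.adjoint A) (A (w s₀)) = c • (w s₀) := by
        rw [hw]
        simp only [map_add, map_smul, hey, hez, smul_add, smul_smul]
        rw [mul_comm c (1 - s₀), mul_comm c s₀]
      rw [hγ]
      simp only [map_smul, hew, smul_smul, mul_comm]
      rw [hc]
  · -- easy direction
    rintro ⟨y₀, hy1, hAy, hinner⟩ t
    have happ : (A + t • B) y₀ = A y₀ + t • B y₀ := by
      simp [ContinuousLinearMap.add_apply, ContinuousLinearMap.smul_apply]
    have hsq : ‖A y₀‖^2 ≤ ‖A y₀ + t • B y₀‖^2 := by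
      rw [norm_add_sq_real, real_inner_smul_right, hinner]
      nlinarith [norm_nonneg (t • B y₀)]
    have h1 : ‖A y₀‖ ≤ ‖A y₀ + t • B y₀‖ := by
      nlinarith [norm_nonneg (A y₀), norm_nonneg (A y₀ + t • B y₀)]
    calc ‖A‖ = ‖A y₀‖ := hAy.symm
      _ ≤ ‖A y₀ + t • B y₀‖ := h1
      _ = ‖(A + t • B) y₀‖ := by rw [happ]
      _ ≤ ‖A + t • B‖ * ‖y₀‖ := (A + t • B).le_opNorm y₀
      _ = ‖A + t • B‖ := by rw [hy1, mul_one]
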